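/- Let w be a valuation on a field K and let c ∈ K satisfy w(c) = 0, w(1 + 4c) = 0, and such that the quadratic form (x,y) ↦ x² − xy − c̄y² over the residue field Kw is anisotropic. Then for all f ∈ K and g ∈ K×: w(g) ≤ max{w(f), 0} if and only if f²/((1 − f − cf²)·g²) ∈ O_w. -/

import Mathlib

/-- Let `w` be a valuation on a field `K` (multiplicative notation: `w c = 1` corresponds to
the additive value `w(c) = 0`, and the additive inequality `w(g) ≤ max {w(f), 0}`
corresponds to `min (w f) 1 ≤ w g`).  Let `c ∈ K` satisfy `w(c) = 0`, `w(1 + 4c) = 0`,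
and suppose that the quadratic form `(x, y) ↦ x² − xy − c̄y²` over the residue field `Kw`
is anisotropic.  Then for all `f ∈ K` and `g ∈ K×`:
`w(g) ≤ max {w(f), 0}` if and only if `f²/((1 − f − cf²)·g²) ∈ O_w`. -/
theorem valuation_le_max_iff_div_mem
    {K : Type*} [Field K] {Γ₀ : Type*} [LinearOrderedCommGroupWithZero Γ₀]
    (w : Valuation K Γ₀) (c : K)
    (hc : c ∈ w.valuationSubring) (hcu : w c = 1) (h4c : w (1 + 4 * c) = 1)
    (hani : ∀ x y : IsLocalRing.ResidueField w.valuationSubring,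
      x ^ 2 - x * y - IsLocalRing.residue w.valuationSubring ⟨c, hc⟩ * y ^ 2 = 0 →
        x = 0 ∧ y = 0) :
    ∀ (f g : K), g ≠ 0 →
      (min (w f) 1 ≤ w g ↔
        f ^ 2 / ((1 - f - c * f ^ 2) * g ^ 2) ∈ w.valuationSubring) := by
  intro f g hg
  have hgw : w g ≠ 0 := by simpa using hg
  have hcf2 : ∀ x : K, w (c * x ^ 2) = w x ^ 2 := by
    intro x; rw [map_mul, map_pow, hcu, one_mul]
  -- Key valuation computation: w (1 - f - c f²) = (max (w f) 1)².
  have key : w (1 - f - c * f ^ 2) = max (w f) 1 ^ 2 := by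
    rcases lt_trichotomy (w f) 1 with h | h | h
    · rw [max_eq_right h.le, one_pow]
      have h2 : w (f + c * f ^ 2) < 1 := by
        refine lt_of_le_of_lt (w.map_add _ _) (max_lt h ?_)
        rw [hcf2]
        exact pow_lt_one₀ zero_le' h two_ne_zero
      have heq : (1 : K) - f - c * f ^ 2 = 1 + -(f + c * f ^ 2) := by ring
      rw [heq]
      exact w.map_one_add_of_lt (by rwa [w.map_neg])
    · -- w f = 1 : residue field argument
      rw [h, max_self, one_pow]
      have hfO : f ∈ w.valuationSubring := by
        rw [Valuation.mem_valuationSubring_iff, h]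
      have hle : w (1 - f - c * f ^ 2) ≤ 1 := by
        refine le_trans (w.map_sub _ _) (max_le (le_trans (w.map_sub _ _) ?_) ?_)
        · simp [h]
        · rw [hcf2, h, one_pow]
      rcases lt_or_eq_of_le hle with hlt | heq
      · exfalso
        set O := w.valuationSubring
        set F : O := ⟨f, hfO⟩
        set C : O := ⟨c, hc⟩
        have hmem : (1 - F - C * F ^ 2 : O) ∈ IsLocalRing.maximalIdeal O := by
          rw [ValuationSubring.valuation_lt_one_iff]
          exact (Valuation.isEquiv_valuation_valuationSubring w).lt_one_iff_lt_one.mp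
            (show w (((1 - F - C * F ^ 2 : O) : K)) < 1 by push_cast; exact hlt)
        have hres : IsLocalRing.residue O (1 - F - C * F ^ 2) = 0 :=
          Ideal.Quotient.eq_zero_iff_mem.mpr hmem
        have h0 : (1 : IsLocalRing.ResidueField O) ^ 2 -
            1 * (IsLocalRing.residue O F) -
            IsLocalRing.residue O C * (IsLocalRing.residue O F) ^ 2 = 0 := by
          rw [one_pow, one_mul]
          rw [← hres]
          simp [map_sub, map_mul, map_pow]
        have := (hani 1 (IsLocalRing.residue O F) h0).1
        exact one_ne_zero this
      · exact heq
    · -- w f > 1 : dominant term c f²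
      rw [max_eq_left h.le]
      have h1f : w (1 - f) < w (c * f ^ 2) := by
        rw [hcf2]
        refine lt_of_le_of_lt (w.map_sub _ _) (max_lt ?_ ?_)
        · calc w (1 : K) = 1 := map_one w
          _ < w f := h
          _ = w f * 1 := (mul_one _).symm
          _ ≤ w f * w f := mul_le_mul_right h.le _
          _ = w f ^ 2 := (sq (w f)).symm
        · calc w f = w f * 1 := (mul_one _).symm
          _ < w f * w f := by
              refine mul_lt_mul_of_pos_left h (zero_lt_iff.mpr ?_)
              exact fun h0 => by simp [h0] at h
          _ = w f ^ 2 := (sq (w f)).symm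
      rw [w.map_sub_eq_of_lt_right h1f, hcf2]
  have hune : (1 : K) - f - c * f ^ 2 ≠ 0 := by
    intro h0
    rw [h0, map_zero] at key
    have : (0 : Γ₀) < max (w f) 1 ^ 2 := by
      refine pow_pos ?_ 2
      exact lt_of_lt_of_le zero_lt_one (le_max_right _ _)
    rw [← key] at this; exact lt_irrefl _ this
  rw [Valuation.mem_valuationSubring_iff, map_div₀, map_mul, map_pow, map_pow, key]
  have hden : (0 : Γ₀) < max (w f) 1 ^ 2 * w g ^ 2 := by
    refine mul_pos (pow_pos (lt_of_lt_of_le zero_lt_one (le_max_right _ _)) 2) ?_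
    exact pow_pos (lt_of_le_of_ne zero_le' (Ne.symm hgw)) 2
  rw [div_le_one₀ hden]
  rcases le_or_gt (w f) 1 with h | h
  · rw [min_eq_left h, max_eq_right h]
    rw [one_pow, one_mul]
    exact (pow_le_pow_iff_left₀ zero_le' zero_le' two_ne_zero).symm
  · rw [min_eq_right h.le, max_eq_left h.le]
    have hf0 : w f ≠ 0 := fun h0 => by simp [h0] at h
    constructor
    · intro hg1
      calc w f ^ 2 = w f ^ 2 * 1 := (mul_one _).symm
      _ ≤ w f ^ 2 * w g ^ 2 := mul_le_mul_right ((one_le_pow_iff_of_nonneg zero_le' two_ne_zero).mpr hg1) _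
    · intro hle
      have : (1 : Γ₀) ≤ w g ^ 2 :=
        le_of_mul_le_mul_left (by rwa [mul_one]) 
          (lt_of_le_of_ne zero_le' (Ne.symm (pow_ne_zero 2 hf0)))
      exact (one_le_pow_iff_of_nonneg zero_le' two_ne_zero).mp this
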